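/- Let n be a positive integer, let A, B : Fin n → Fin n → ℤ, and let M be a nonnegative integer with |A i k| ≤ M and |B k j| ≤ M for all i, j, k. Define A'' i k = A i k − 2·(k+1)·M and B'' k j = B k j + 2·(k+1)·M (where k+1 is the 1-based index of k). Then: (1) for every i, the function k ↦ A'' i k is non-increasing; (2) for every j, the function k ↦ B'' k j is non-decreasing; and (3) for all i, j, min_{k} (A'' i k + B'' k j) = min_{k} (A i k + B k j), i.e., the (min,+) matrix product of A'' and B'' equals the (min,+) matrix product of A and B. -/
import Mathlib


theorem minplus_matrix_shift_nonincr_nondecr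
    (n : ℕ) (hn : 0 < n) (A B : Fin n → Fin n → ℤ) (M : ℕ)
    (hA : ∀ i k : Fin n, |A i k| ≤ (M : ℤ))
    (hB : ∀ k j : Fin n, |B k j| ≤ (M : ℤ)) :
    (∀ i : Fin n, Antitone fun k : Fin n => A i k - 2 * ((k : ℕ) + 1) * (M : ℤ)) ∧
    (∀ j : Fin n, Monotone fun k : Fin n => B k j + 2 * ((k : ℕ) + 1) * (M : ℤ)) ∧
    (∀ i j : Fin n,
      Finset.univ.inf' ⟨⟨0, hn⟩, Finset.mem_univ _⟩
          (fun k : Fin n =>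
            (A i k - 2 * ((k : ℕ) + 1) * (M : ℤ)) +
              (B k j + 2 * ((k : ℕ) + 1) * (M : ℤ)))
        = Finset.univ.inf' ⟨⟨0, hn⟩, Finset.mem_univ _⟩
            (fun k : Fin n => A i k + B k j)) := by
  refine ⟨?_, ?_, ?_⟩
  · intro i k l hkl
    rcases eq_or_lt_of_le hkl with h | h
    · subst h; exact le_refl _
    simp only
    have h1 := (abs_le.mp (hA i k)).1
    have h2 := (abs_le.mp (hA i l)).2
    have hk1 : (k : ℤ) + 1 ≤ (l : ℤ) := by
      have : (k : ℕ) < (l : ℕ) := h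
      omega
    nlinarith [Int.natCast_nonneg M]
  · intro j k l hkl
    rcases eq_or_lt_of_le hkl with h | h
    · subst h; exact le_refl _
    simp only
    have h1 := (abs_le.mp (hB k j)).2
    have h2 := (abs_le.mp (hB l j)).1
    have hk1 : (k : ℤ) + 1 ≤ (l : ℤ) := by
      have : (k : ℕ) < (l : ℕ) := h
      omega
    nlinarith [Int.natCast_nonneg M]
  · intro i j
    apply Finset.inf'_congr _ rfl
    intro k _
    ring
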